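/- Assume b = 0, a·μ₀ ≥ d and 3·a·k > d³. Then h has exactly three real roots; more precisely, there exists ẑ with 0 < ẑ < 1/d such that the set of real roots of h is {−ẑ, 0, ẑ}. -/

import Mathlib

noncomputable def myAtanh (y : ℝ) : ℝ := (Real.log (1 + y) - Real.log (1 - y)) / 2

lemma tanh_formula (x : ℝ) :
    Real.tanh x = (Real.exp (2 * x) - 1) / (Real.exp (2 * x) + 1) := by
  rw [Real.tanh_eq_sinh_div_cosh, Real.sinh_eq, Real.cosh_eq, Real.exp_neg,
    show (2 : ℝ) * x = x + x by ring, Real.exp_add]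
  have h1 : Real.exp x ≠ 0 := (Real.exp_pos x).ne'
  have h2 : Real.exp x + (Real.exp x)⁻¹ ≠ 0 := by positivity
  have h3 : Real.exp x * Real.exp x + 1 ≠ 0 := by positivity
  field_simp

lemma my_tanh_lt_one (x : ℝ) : Real.tanh x < 1 := by
  rw [tanh_formula]
  have h := Real.exp_pos (2 * x)
  rw [div_lt_one (by linarith)]
  linarith

lemma my_neg_one_lt_tanh (x : ℝ) : -1 < Real.tanh x := by
  rw [tanh_formula]
  have h := Real.exp_pos (2 * x)
  rw [lt_div_iff₀ (by linarith)]
  linarith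

lemma my_tanh_strictMono : StrictMono Real.tanh := by
  intro x y hxy
  rw [tanh_formula, tanh_formula]
  have hx := Real.exp_pos (2 * x)
  have hy := Real.exp_pos (2 * y)
  have hlt : Real.exp (2 * x) < Real.exp (2 * y) := Real.exp_lt_exp.2 (by linarith)
  rw [div_lt_div_iff₀ (by linarith) (by linarith)]
  nlinarith

lemma tanh_myAtanh {y : ℝ} (h1 : -1 < y) (h2 : y < 1) : Real.tanh (myAtanh y) = y := by
  have hp : (0 : ℝ) < 1 + y := by linarith
  have hm : (0 : ℝ) < 1 - y := by linarith
  rw [tanh_formula, myAtanh, show 2 * ((Real.log (1 + y) - Real.log (1 - y)) / 2)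
      = Real.log (1 + y) - Real.log (1 - y) by ring,
    Real.exp_sub, Real.exp_log hp, Real.exp_log hm]
  field_simp
  ring

lemma myAtanh_tanh (x : ℝ) : myAtanh (Real.tanh x) = x :=
  my_tanh_strictMono.injective (tanh_myAtanh (my_neg_one_lt_tanh x) (my_tanh_lt_one x))

lemma hasDerivAt_myAtanh {y : ℝ} (h1 : -1 < y) (h2 : y < 1) :
    HasDerivAt myAtanh (1 / (1 - y ^ 2)) y := by
  have hp : (1 : ℝ) + y ≠ 0 := by linarith
  have hm : (1 : ℝ) - y ≠ 0 := by linarith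
  have d1 : HasDerivAt (fun t : ℝ => Real.log (1 + t)) (1 + y)⁻¹ y := by
    have := (Real.hasDerivAt_log hp).comp y ((hasDerivAt_id y).const_add 1)
    simpa [Function.comp_def] using this
  have d2 : HasDerivAt (fun t : ℝ => Real.log (1 - t)) (-(1 - y)⁻¹) y := by
    have := (Real.hasDerivAt_log hm).comp y ((hasDerivAt_id y).neg.const_add 1)
    simpa [sub_eq_add_neg, Function.comp_def] using this
  have := (d1.sub d2).div_const 2
  refine this.congr_deriv ?_
  have hsq : (1 : ℝ) - y ^ 2 ≠ 0 := by nlinarith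
  field_simp
  ring

lemma myAtanh_zero : myAtanh 0 = 0 := by simp [myAtanh]

lemma myAtanh_le {x : ℝ} (h0 : 0 ≤ x) (h1 : x < 1) :
    myAtanh x ≤ x + x ^ 3 / (3 * (1 - x ^ 2)) := by
  set g : ℝ → ℝ := fun t => t + t ^ 3 / (3 * (1 - t ^ 2)) - myAtanh t with hg
  have hder : ∀ t ∈ Set.Ioo (-1 : ℝ) 1,
      HasDerivAt g (2 * t ^ 4 / (3 * (1 - t ^ 2) ^ 2)) t := by
    intro t ht
    have hsq : (1 : ℝ) - t ^ 2 ≠ 0 := by nlinarith [ht.1, ht.2]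
    have hden : (3 : ℝ) * (1 - t ^ 2) ≠ 0 := by simpa using hsq
    have d1 : HasDerivAt (fun s : ℝ => s ^ 3) ((3 : ℕ) * t ^ 2) t := by
      simpa using hasDerivAt_pow 3 t
    have d2 : HasDerivAt (fun s : ℝ => 3 * (1 - s ^ 2)) (3 * (-(2 * t))) t := by
      have : HasDerivAt (fun s : ℝ => 1 - s ^ 2) (-((2 : ℕ) * t ^ 1)) t := by
        simpa using ((hasDerivAt_pow 2 t).const_sub 1)
      simpa using this.const_mul 3
    have d3 := d1.div d2 hden
    have d4 := ((hasDerivAt_id t).add d3).sub (hasDerivAt_myAtanh ht.1 ht.2)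
    refine d4.congr_deriv ?_
    field_simp
    ring
  have hmono : MonotoneOn g (Set.Ico (0 : ℝ) 1) := by
    apply monotoneOn_of_deriv_nonneg (convex_Ico 0 1)
    · intro t ht
      exact (hder t ⟨by linarith [ht.1], ht.2⟩).continuousAt.continuousWithinAt
    · intro t ht
      rw [interior_Ico] at ht
      exact (hder t ⟨by linarith [ht.1], ht.2⟩).differentiableAt.differentiableWithinAt
    · intro t ht
      rw [interior_Ico] at ht
      rw [(hder t ⟨by linarith [ht.1], ht.2⟩).deriv]
      have hsq : (0:ℝ) < 1 - t ^ 2 := by nlinarith [ht.1, ht.2]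
      positivity
  have h00 : g 0 = 0 := by simp [hg, myAtanh_zero]
  have := hmono (Set.mem_Ico.2 ⟨le_refl 0, by norm_num⟩) (Set.mem_Ico.2 ⟨h0, h1⟩) h0
  rw [h00] at this
  simp only [hg] at this
  linarith

noncomputable def Mfun (a d k ks μ0 z : ℝ) : ℝ :=
  myAtanh (d * z) / z ^ 3 - a * μ0 / z ^ 2 - a * k + a * ks * z ^ 2

lemma hasDerivAt_Mfun {a d k ks μ0 : ℝ} (hd : 0 < d) {z : ℝ}
    (hz : z ∈ Set.Ioo (0 : ℝ) (1 / d)) :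
    HasDerivAt (Mfun a d k ks μ0)
      ((d / (1 - (d * z) ^ 2) * z ^ 3 - myAtanh (d * z) * (3 * z ^ 2)) / (z ^ 3) ^ 2
        + 2 * a * μ0 / z ^ 3 + 2 * a * ks * z) z := by
  obtain ⟨hz0, hzd⟩ := hz
  have hzne : z ≠ 0 := hz0.ne'
  have hx1 : 0 < d * z := mul_pos hd hz0
  have hx2 : d * z < 1 := by rw [mul_comm]; exact (lt_div_iff₀ hd).1 hzd
  have hu : (0 : ℝ) < 1 - (d * z) ^ 2 := by nlinarith
  have dA : HasDerivAt (fun z : ℝ => myAtanh (d * z)) (1 / (1 - (d * z) ^ 2) * d) z := by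
    have := (hasDerivAt_myAtanh (by linarith) hx2).comp z ((hasDerivAt_id z).const_mul d)
    simpa [Function.comp_def] using this
  have dB := dA.div (hasDerivAt_pow 3 z) (pow_ne_zero 3 hzne)
  have dC := (hasDerivAt_const z (a * μ0)).div (hasDerivAt_pow 2 z) (pow_ne_zero 2 hzne)
  have dD := (hasDerivAt_pow 2 z).const_mul (a * ks)
  have dE := ((dB.sub dC).sub (hasDerivAt_const z (a * k))).add dD
  unfold Mfun
  refine dE.congr_deriv ?_
  push_cast
  field_simp
  ring

lemma strictMonoOn_Mfun {a d k ks μ0 : ℝ} (ha : 0 < a) (hd : 0 < d) (hks : 0 < ks)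
    (hμ0 : 0 < μ0) (hcrit : a * μ0 ≥ d) :
    StrictMonoOn (Mfun a d k ks μ0) (Set.Ioo (0 : ℝ) (1 / d)) := by
  apply strictMonoOn_of_hasDerivWithinAt_pos (convex_Ioo _ _)
    (fun z hz => (hasDerivAt_Mfun hd hz).continuousAt.continuousWithinAt)
    (f' := fun z => (d / (1 - (d * z) ^ 2) * z ^ 3 - myAtanh (d * z) * (3 * z ^ 2)) / (z ^ 3) ^ 2
        + 2 * a * μ0 / z ^ 3 + 2 * a * ks * z)
    (fun z hz => by
      rw [interior_Ioo] at hz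
      exact (hasDerivAt_Mfun hd hz).hasDerivWithinAt)
  intro z hz
  rw [interior_Ioo] at hz
  obtain ⟨hz0, hzd⟩ := hz
  have hx1 : 0 < d * z := mul_pos hd hz0
  have hx2 : d * z < 1 := by rw [mul_comm]; exact (lt_div_iff₀ hd).1 hzd
  have hu : (0 : ℝ) < 1 - (d * z) ^ 2 := by nlinarith
  have hT := myAtanh_le hx1.le hx2
  have h3 : myAtanh (d * z) * (3 * z ^ 2)
      ≤ (d * z + (d * z) ^ 3 / (3 * (1 - (d * z) ^ 2))) * (3 * z ^ 2) :=
    mul_le_mul_of_nonneg_right hT (by positivity)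
  have heq : d / (1 - (d * z) ^ 2) * z ^ 3
      - (d * z + (d * z) ^ 3 / (3 * (1 - (d * z) ^ 2))) * (3 * z ^ 2) = -2 * d * z ^ 3 := by
    have : (1:ℝ) - d ^ 2 * z ^ 2 ≠ 0 := by nlinarith
    field_simp
    ring
  have h1 : -2 * d * z ^ 3 ≤ d / (1 - (d * z) ^ 2) * z ^ 3 - myAtanh (d * z) * (3 * z ^ 2) := by
    linarith
  have hfirst : (-2 * d * z ^ 3) / (z ^ 3) ^ 2
      ≤ (d / (1 - (d * z) ^ 2) * z ^ 3 - myAtanh (d * z) * (3 * z ^ 2)) / (z ^ 3) ^ 2 := by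
    gcongr
  have heq2 : (-2 * d * z ^ 3) / (z ^ 3) ^ 2 = -(2 * d / z ^ 3) := by
    field_simp
  have hsecond : 2 * d / z ^ 3 ≤ 2 * a * μ0 / z ^ 3 := by
    rw [div_le_div_iff₀ (by positivity) (by positivity)]
    nlinarith [pow_pos hz0 3]
  have hlast : 0 < 2 * a * ks * z := by positivity
  rw [heq2] at hfirst
  linarith

set_option maxHeartbeats 2000000 in
theorem snod_three_fixed_points
    (a d k ks ε μ0 : ℝ)
    (ha : 0 < a) (hd : 0 < d) (hk : 0 < k) (hks : 0 < ks) (hε : 0 < ε) (hμ0 : 0 < μ0)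
    (hcrit : a * μ0 ≥ d) (hkbig : 3 * a * k > d ^ 3) :
    ∃ zhat : ℝ, 0 < zhat ∧ zhat < 1 / d ∧
      {z : ℝ | -d * z + Real.tanh (a * z * (-ks * z ^ 4 + k * z ^ 2 + μ0)) = 0} =
        {-zhat, 0, zhat} := by
  have hmono := strictMonoOn_Mfun (a := a) (d := d) (k := k) (ks := ks) (μ0 := μ0)
    ha hd hks hμ0 hcrit
  -- upper bound for M via myAtanh_le
  have hMle : ∀ z ∈ Set.Ioo (0 : ℝ) (1 / d),
      Mfun a d k ks μ0 z ≤ d ^ 3 / (3 * (1 - d ^ 2 * z ^ 2)) - a * k + a * ks * z ^ 2 := by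
    intro z hz
    obtain ⟨hz0, hzd⟩ := hz
    have hx1 : 0 < d * z := mul_pos hd hz0
    have hx2 : d * z < 1 := by rw [mul_comm]; exact (lt_div_iff₀ hd).1 hzd
    have hu : (0 : ℝ) < 1 - (d * z) ^ 2 := by nlinarith
    have hu2 : (0 : ℝ) < 1 - d ^ 2 * z ^ 2 := by nlinarith
    have hT := myAtanh_le hx1.le hx2
    have hA : myAtanh (d * z) / z ^ 3
        ≤ (d * z + (d * z) ^ 3 / (3 * (1 - (d * z) ^ 2))) / z ^ 3 := by
      gcongr
    have hB : (d * z + (d * z) ^ 3 / (3 * (1 - (d * z) ^ 2))) / z ^ 3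
        = d / z ^ 2 + d ^ 3 / (3 * (1 - d ^ 2 * z ^ 2)) := by
      field_simp
    have hC : d / z ^ 2 ≤ a * μ0 / z ^ 2 := by
      rw [div_le_div_iff₀ (by positivity) (by positivity)]
      nlinarith [pow_pos hz0 2]
    unfold Mfun
    rw [hB] at hA
    linarith
  -- the point z1 where M is negative
  have hR0 : d ^ 3 / (3 * (1 - d ^ 2 * (0:ℝ) ^ 2)) - a * k + a * ks * (0:ℝ) ^ 2 < 0 := by
    norm_num
    rw [div_lt_iff₀ (by norm_num : (0:ℝ) < 3)]
    linarith
  have hRcont : ContinuousAt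
      (fun z : ℝ => d ^ 3 / (3 * (1 - d ^ 2 * z ^ 2)) - a * k + a * ks * z ^ 2) 0 := by
    apply ContinuousAt.add
    apply ContinuousAt.sub
    · exact ContinuousAt.div continuousAt_const (by fun_prop) (by norm_num)
    · exact continuousAt_const
    · fun_prop
  obtain ⟨ε', hε', hball⟩ := Metric.mem_nhds_iff.1 (hRcont (Iio_mem_nhds hR0))
  set z1 : ℝ := min (ε' / 2) (1 / (2 * d)) with hz1def
  clear_value z1
  have hz10 : 0 < z1 := hz1def ▸ lt_min (by linarith) (by positivity)
  have hz1d : z1 < 1 / d := by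
    have h1 : z1 ≤ 1 / (2 * d) := hz1def ▸ min_le_right _ _
    have : 1 / (2 * d) < 1 / d := by
      rw [div_lt_div_iff₀ (by positivity) hd]
      nlinarith
    linarith
  have hz1s : z1 ∈ Set.Ioo (0 : ℝ) (1 / d) := ⟨hz10, hz1d⟩
  have hRz1 : d ^ 3 / (3 * (1 - d ^ 2 * z1 ^ 2)) - a * k + a * ks * z1 ^ 2 < 0 := by
    have hmem : z1 ∈ Metric.ball (0 : ℝ) ε' := by
      rw [Metric.mem_ball, Real.dist_eq, sub_zero, abs_of_pos hz10]
      have := min_le_left (ε' / 2) (1 / (2 * d))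
      linarith
    exact hball hmem
  have hMz1 : Mfun a d k ks μ0 z1 < 0 := lt_of_le_of_lt (hMle z1 hz1s) hRz1
  -- the point z2 where M is positive
  set E : ℝ := (4 * a * μ0 * d ^ 2 + a * k) / d ^ 3 + 1 with hEdef
  clear_value E
  have hE1 : 1 < E := by
    have h0 : 0 < (4 * a * μ0 * d ^ 2 + a * k) / d ^ 3 := by positivity
    rw [hEdef]
    linarith
  have htE0 : 0 < Real.tanh E := by
    have := my_tanh_strictMono (show (0:ℝ) < E by linarith)
    rwa [Real.tanh_zero] at this
  have htE1 : Real.tanh E < 1 := my_tanh_lt_one E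
  set z2 : ℝ := Real.tanh E / d with hz2def
  clear_value z2
  have hz20 : 0 < z2 := hz2def ▸ div_pos htE0 hd
  have hz2d : z2 < 1 / d := by
    rw [hz2def, div_lt_div_iff₀ hd hd]
    nlinarith
  have hz2s : z2 ∈ Set.Ioo (0 : ℝ) (1 / d) := ⟨hz20, hz2d⟩
  have hdz2 : d * z2 = Real.tanh E := by
    rw [hz2def]
    field_simp
  have hatnh : myAtanh (d * z2) = E := by rw [hdz2, myAtanh_tanh]
  have htanh1 : 1 / 2 < Real.tanh 1 := by
    rw [tanh_formula]
    have h3 : (3 : ℝ) < Real.exp 2 := by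
      have := Real.add_one_lt_exp (show (2:ℝ) ≠ 0 by norm_num)
      linarith
    have hpos : (0:ℝ) < Real.exp (2 * 1) + 1 := by positivity
    rw [div_lt_div_iff₀ (by norm_num) hpos]
    norm_num
    linarith
  have htEhalf : 1 / 2 < Real.tanh E := by
    have := my_tanh_strictMono.monotone hE1.le
    linarith
  have hMz2 : 0 < Mfun a d k ks μ0 z2 := by
    have hi : E * d ^ 3 ≤ E / z2 ^ 3 := by
      rw [le_div_iff₀ (pow_pos hz20 3)]
      have h01 : 0 ≤ d * z2 := (mul_pos hd hz20).le
      have h11 : d * z2 ≤ 1 := by rw [hdz2]; exact htE1.le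
      have hcube : (d * z2) ^ 3 ≤ 1 := pow_le_one₀ h01 h11
      nlinarith [mul_le_mul_of_nonneg_left hcube (by linarith : (0:ℝ) ≤ E)]
    have hii : a * μ0 / z2 ^ 2 ≤ 4 * a * μ0 * d ^ 2 := by
      rw [div_le_iff₀ (pow_pos hz20 2)]
      have hh : 1 / 2 < d * z2 := by rw [hdz2]; exact htEhalf
      have hsq : 1 / 4 ≤ (d * z2) ^ 2 := by nlinarith
      nlinarith [mul_le_mul_of_nonneg_left hsq (mul_pos ha hμ0).le]
    have hiv : E * d ^ 3 = 4 * a * μ0 * d ^ 2 + a * k + d ^ 3 := by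
      rw [hEdef]
      field_simp
    have hiii : 0 < a * ks * z2 ^ 2 := by positivity
    unfold Mfun
    rw [hatnh]
    linarith [pow_pos hd 3]
  -- the root
  have hz12 : z1 < z2 := by
    rcases lt_trichotomy z1 z2 with h | h | h
    · exact h
    · rw [h] at hMz1; linarith
    · have := hmono hz2s hz1s h; linarith
  have hsub : Set.Icc z1 z2 ⊆ Set.Ioo (0 : ℝ) (1 / d) := Set.Icc_subset_Ioo hz10 hz2d
  have hcontIcc : ContinuousOn (Mfun a d k ks μ0) (Set.Icc z1 z2) :=
    fun z hz => (hasDerivAt_Mfun hd (hsub hz)).continuousAt.continuousWithinAt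
  obtain ⟨zhat, hzmem, hMval⟩ :=
    intermediate_value_Icc hz12.le hcontIcc ⟨hMz1.le, hMz2.le⟩
  have hzs : zhat ∈ Set.Ioo (0 : ℝ) (1 / d) := hsub hzmem
  -- root correspondence on (0, 1/d)
  have hroot_iff : ∀ z ∈ Set.Ioo (0 : ℝ) (1 / d),
      (-d * z + Real.tanh (a * z * (-ks * z ^ 4 + k * z ^ 2 + μ0)) = 0 ↔
        Mfun a d k ks μ0 z = 0) := by
    intro z hz
    obtain ⟨hz0, hzd⟩ := hz
    have hx1 : 0 < d * z := mul_pos hd hz0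
    have hx2 : d * z < 1 := by rw [mul_comm]; exact (lt_div_iff₀ hd).1 hzd
    constructor
    · intro hroot
      have ht : Real.tanh (a * z * (-ks * z ^ 4 + k * z ^ 2 + μ0)) = d * z := by linarith
      have hψ : a * z * (-ks * z ^ 4 + k * z ^ 2 + μ0) = myAtanh (d * z) :=
        my_tanh_strictMono.injective (by rw [ht, tanh_myAtanh (by linarith) hx2])
      unfold Mfun
      rw [← hψ]
      field_simp
      ring
    · intro hM
      unfold Mfun at hM
      have hψ : myAtanh (d * z) = a * z * (-ks * z ^ 4 + k * z ^ 2 + μ0) := by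
        have h1 : myAtanh (d * z) / z ^ 3 = a * μ0 / z ^ 2 + a * k - a * ks * z ^ 2 := by
          linarith
        have h2 : myAtanh (d * z) = (a * μ0 / z ^ 2 + a * k - a * ks * z ^ 2) * z ^ 3 := by
          rw [← h1]
          field_simp
        rw [h2]
        field_simp
        ring
      rw [← hψ, tanh_myAtanh (by linarith) hx2]
      ring
  -- oddness
  have hodd : ∀ z : ℝ,
      -d * (-z) + Real.tanh (a * (-z) * (-ks * (-z) ^ 4 + k * (-z) ^ 2 + μ0))
        = -(-d * z + Real.tanh (a * z * (-ks * z ^ 4 + k * z ^ 2 + μ0))) := by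
    intro z
    have harg : a * (-z) * (-ks * (-z) ^ 4 + k * (-z) ^ 2 + μ0)
        = -(a * z * (-ks * z ^ 4 + k * z ^ 2 + μ0)) := by ring
    rw [harg, Real.tanh_neg]
    ring
  -- positive roots are < 1/d
  have hbound : ∀ z : ℝ, 0 < z →
      -d * z + Real.tanh (a * z * (-ks * z ^ 4 + k * z ^ 2 + μ0)) = 0 → z < 1 / d := by
    intro z hz0 hroot
    have h1 := my_tanh_lt_one (a * z * (-ks * z ^ 4 + k * z ^ 2 + μ0))
    have : d * z < 1 := by linarith
    rw [lt_div_iff₀ hd]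
    linarith [mul_comm z d]
  have hzhat_root : -d * zhat + Real.tanh (a * zhat * (-ks * zhat ^ 4 + k * zhat ^ 2 + μ0)) = 0 :=
    (hroot_iff zhat hzs).2 hMval
  refine ⟨zhat, hzs.1, hzs.2, ?_⟩
  ext z
  simp only [Set.mem_setOf_eq, Set.mem_insert_iff, Set.mem_singleton_iff]
  constructor
  · intro hz
    rcases lt_trichotomy z 0 with hneg | h0 | hpos
    · left
      have hz' : -d * (-z) + Real.tanh (a * (-z) * (-ks * (-z) ^ 4 + k * (-z) ^ 2 + μ0)) = 0 := by
        rw [hodd z, hz, neg_zero]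
      have hnz0 : 0 < -z := by linarith
      have hnzd : -z < 1 / d := hbound (-z) hnz0 hz'
      have hM1 : Mfun a d k ks μ0 (-z) = 0 := (hroot_iff (-z) ⟨hnz0, hnzd⟩).1 hz'
      have := hmono.injOn ⟨hnz0, hnzd⟩ hzs (by rw [hM1, hMval])
      linarith
    · right; left; exact h0
    · right; right
      have hzd : z < 1 / d := hbound z hpos hz
      have hM1 : Mfun a d k ks μ0 z = 0 := (hroot_iff z ⟨hpos, hzd⟩).1 hz
      exact hmono.injOn ⟨hpos, hzd⟩ hzs (by rw [hM1, hMval])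
  · intro hz
    rcases hz with h | h | h
    · subst h
      rw [hodd zhat, hzhat_root, neg_zero]
    · subst h
      norm_num
    · subst h
      exact hzhat_root
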